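/- arXiv:2309.11190 — 8 statements merged into one kernel-verified Lean document; each statement's English description precedes it below -/
import Mathlib

section
/- Let λ_A = a_1 a_2 … a_n and λ_B = b_1 b_2 … b_n be a binary string of length n and its reversal (so b_i = a_{n+1−i}), with a_1 = 1, a_n = 1 (both endpoints occupied), total number of 1's at least 3, and λ_B ≤ λ_A lexicographically. If the robot at position n moves one step outside the segment (so the new strings of length n+1 are λ'_A = a_1 a_2 … a_{n−1} 0 a_n and λ'_{B'} = a_n 0 a_{n−1} … a_2 a_1), then λ'_{B'} < λ'_A strictly in lexicographic order. -/
lemma lex_append_of_lex : ∀ {x y : List Bool}, List.Lex (· < ·) x y →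
    x.length = y.length → ∀ z z' : List Bool,
    List.Lex (· < ·) (x ++ z) (y ++ z') := by
  intro x y h
  induction h with
  | nil => intro hl; simp at hl
  | rel h => intro hl z z'; exact List.Lex.rel h
  | cons h ih => intro hl z z'; exact List.Lex.cons (ih (by simpa using hl) z z')

lemma lex_of_lex_append : ∀ {x y : List Bool}, x.length = y.length →
    ∀ {z : List Bool}, List.Lex (· < ·) (x ++ z) (y ++ z) →
    x = y ∨ List.Lex (· < ·) x y := by
  intro x
  induction x with
  | nil =>
    intro y hl z h
    obtain rfl : y = [] := List.length_eq_zero_iff.mp hl.symm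
    exact Or.inl rfl
  | cons a x ih =>
    intro y hl z h
    cases y with
    | nil => simp at hl
    | cons b y =>
      cases h with
      | rel hr => exact Or.inr (List.Lex.rel hr)
      | cons h' =>
        rcases ih (by simpa using hl) h' with rfl | hlex
        · exact Or.inl rfl
        · exact Or.inr (List.Lex.cons hlex)

lemma le_of_le_append {x y : List Bool} (hl : x.length = y.length) {z : List Bool}
    (h : x ++ z = y ++ z ∨ List.Lex (· < ·) (x ++ z) (y ++ z)) :
    x = y ∨ List.Lex (· < ·) x y := by
  rcases h with h | h
  · exact Or.inl (by simpa using h)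
  · exact lex_of_lex_append hl h

lemma main_aux : ∀ n : ℕ, ∀ x : List Bool, x.length = n →
    (x.reverse = x ∨ List.Lex (· < ·) x.reverse x) → 1 ≤ x.count true →
    List.Lex (· < ·) (x ++ [false]).reverse (x ++ [false]) := by
  intro n
  induction n using Nat.strong_induction_on with
  | _ n ih =>
    intro x hn hrev hcount
    cases x with
    | nil => simp at hcount
    | cons a x' =>
      cases a with
      | true =>
        have h1 : ((true :: x') ++ [false]).reverse = false :: (x'.reverse ++ [true]) := by
          simp
        rw [h1]
        exact List.Lex.rel (by decide)
      | false =>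
        rcases List.eq_nil_or_concat x' with rfl | ⟨x'', a, rfl⟩
        · simp at hcount
        · simp only [List.concat_eq_append] at hn hcount hrev ⊢
          -- show a = false
          have ha : a = false := by
            cases a
            · rfl
            · exfalso
              rcases hrev with h | h
              · have := congrArg List.head? h
                simp at this
              · have h2 : (false :: (x'' ++ [true])).reverse = true :: (x''.reverse ++ [false]) := by
                  simp
                rw [h2] at h
                cases h with
                | rel hr => exact absurd hr (by decide)
          subst ha
          -- x = false :: x'' ++ [false]
          have hrev' : x''.reverse = x'' ∨ List.Lex (· < ·) x''.reverse x'' := by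
            have h2 : (false :: (x'' ++ [false])).reverse
                = false :: (x''.reverse ++ [false]) := by simp
            rcases hrev with h | h
            · rw [h2] at h
              have := List.cons.injEq .. ▸ h
              have h3 : x''.reverse ++ [false] = x'' ++ [false] := by
                injection h
              exact Or.inl (by simpa using h3)
            · rw [h2] at h
              cases h with
              | rel hr => simp at hr
              | cons h' => exact lex_of_lex_append (by simp) h'
          have hcount' : 1 ≤ x''.count true := by
            simpa using hcount
          have hlen : x''.length < n := by
            simp at hn; omega
          have hmain := ih x''.length hlen x'' rfl hrev' hcount'
          -- rewrite goal
          have hgoal : ((false :: (x'' ++ [false])) ++ [false]).reverse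
              = false :: ((false :: x''.reverse) ++ [false]) := by simp
          rw [hgoal]
          have hrhs : (false :: (x'' ++ [false])) ++ [false]
              = false :: ((x'' ++ [false]) ++ [false]) := by simp
          rw [hrhs]
          apply List.Lex.cons
          have hmain' : List.Lex (· < ·) (false :: x''.reverse) (x'' ++ [false]) := by
            have : (x'' ++ [false]).reverse = false :: x''.reverse := by simp
            rwa [this] at hmain
          exact lex_append_of_lex hmain' (by simp) _ _

/-- If both endpoints of a binary word are occupied, there are at least three 1's,
and the reversal is lexicographically ≤ the word, then after the tail robot moves one
step outside (inserting a 0 before the final 1), the reversal of the new word is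
strictly lexicographically smaller than the new word. -/
theorem tail_move_out_strict (w : List Bool)
    (hhead : w.head? = some true) (hlast : w.getLast? = some true)
    (hcount : 3 ≤ w.count true)
    (hle : w.reverse = w ∨ List.Lex (· < ·) w.reverse w) :
    List.Lex (· < ·) (w.dropLast ++ [false, true]).reverse (w.dropLast ++ [false, true]) := by
  cases w with
  | nil => simp at hhead
  | cons a w₁ =>
    have ha : a = true := by simpa using hhead
    subst ha
    rcases List.eq_nil_or_concat w₁ with rfl | ⟨t, b, rfl⟩
    · simp at hcount
    · simp only [List.concat_eq_append] at hlast hcount hle ⊢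
      have hb : b = true := by
        have he : (true :: (t ++ [b])) = (true :: t) ++ [b] := by simp
        rw [he, List.getLast?_concat] at hlast
        simpa using hlast
      subst hb
      have hdl : (true :: (t ++ [true])).dropLast = true :: t := by
        have : true :: (t ++ [true]) = (true :: t) ++ [true] := by simp
        rw [this, List.dropLast_concat]
      rw [hdl]
      have hrevt : t.reverse = t ∨ List.Lex (· < ·) t.reverse t := by
        have h2 : (true :: (t ++ [true])).reverse = true :: (t.reverse ++ [true]) := by simp
        rcases hle with h | h
        · rw [h2] at h
          have h3 : t.reverse ++ [true] = t ++ [true] := by injection h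
          exact Or.inl (by simpa using h3)
        · rw [h2] at h
          cases h with
          | rel hr => simp at hr
          | cons h' => exact lex_of_lex_append (by simp) h'
      have hcount' : 1 ≤ t.count true := by simp [List.count_cons, List.count_append] at hcount ⊢; exact hcount
      have hmain := main_aux t.length t rfl hrevt hcount'
      have hmain' : List.Lex (· < ·) (false :: t.reverse) (t ++ [false]) := by
        have : (t ++ [false]).reverse = false :: t.reverse := by simp
        rwa [this] at hmain
      have hgoal : ((true :: t) ++ [false, true]).reverse
          = true :: ((false :: t.reverse) ++ [true]) := by simp
      rw [hgoal]
      have hrhs : (true :: t) ++ [false, true] = true :: ((t ++ [false]) ++ [true]) := by simp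
      rw [hrhs]
      exact List.Lex.cons (lex_append_of_lex hmain' (by simp) _ _)
end

section
/- Suppose a finite set S ⊆ ℤ with |S| ≥ 3 has distinct occupancy strings λ_B < λ_A from the endpoints of its smallest enclosing segment (so max S is the 'tail'). If an interior robot r ∈ S with min S < r < max S and r − 1 ∉ S moves one step left (S is replaced by S' = (S \ {r}) ∪ {r − 1}), then the smallest enclosing segment of S' equals that of S, and the new strings still satisfy λ'_B < λ'_A; in particular S' is still asymmetric and the tail is unchanged. -/
def lo (S : Finset ℤ) : ℤ := WithTop.untopD 0 S.min
def hi (S : Finset ℤ) : ℤ := WithBot.unbotD 0 S.max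

def wordOf (S : Finset ℤ) : List Bool :=
  (List.range ((hi S - lo S).toNat + 1)).map fun i => decide ((lo S + (i : ℤ)) ∈ S)

theorem lexTrans : ∀ {a b c : List Bool},
    List.Lex (· < ·) a b → List.Lex (· < ·) b c → List.Lex (· < ·) a c
  | _, _, _, .nil, .cons _ => .nil
  | _, _, _, .nil, .rel _ => .nil
  | _, _, _, .cons h₁, .cons h₂ => .cons (lexTrans h₁ h₂)
  | _, _, _, .cons _, .rel h => .rel h
  | _, _, _, .rel h, .cons _ => .rel h
  | _, _, _, .rel h₁, .rel h₂ => .rel (lt_trans h₁ h₂)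

theorem lo_eq {S : Finset ℤ} {a : ℤ} (ha : a ∈ S) (h : ∀ x ∈ S, a ≤ x) : lo S = a := by
  have h1 : S.min = (a : WithTop ℤ) :=
    le_antisymm (Finset.min_le ha) (Finset.le_min fun b hb => WithTop.coe_le_coe.mpr (h b hb))
  simp [lo, h1]

theorem hi_eq {S : Finset ℤ} {a : ℤ} (ha : a ∈ S) (h : ∀ x ∈ S, x ≤ a) : hi S = a := by
  have h1 : S.max = (a : WithBot ℤ) :=
    le_antisymm (Finset.max_le fun b hb => WithBot.coe_le_coe.mpr (h b hb)) (Finset.le_max ha)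
  simp [hi, h1]

theorem coe_list_eq (l : List ℕ) : ((l : List ℕ) : List ℤ) = l.map Nat.cast := by
  show l.flatMap _ = _
  induction l with
  | nil => rfl
  | cons a t ih => simp_all [List.flatMap_cons]

theorem wordOf_length (S : Finset ℤ) : (wordOf S).length = (hi S - lo S).toNat + 1 := by
  simp only [wordOf, coe_list_eq, List.length_map, List.length_range]

theorem wordOf_getElem (S : Finset ℤ) (k : ℕ) (hk : k < (wordOf S).length) :
    (wordOf S)[k] = decide ((lo S + (k : ℤ)) ∈ S) := by
  simp only [wordOf, coe_list_eq, List.getElem_map, List.getElem_range]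

theorem decomp (l : List Bool) (i : ℕ) (h : i + 1 < l.length) :
    l = l.take i ++ l[i] :: l[i + 1] :: l.drop (i + 1 + 1) := by
  conv_lhs => rw [← List.take_append_drop i l]
  rw [List.drop_eq_getElem_cons (by omega), List.drop_eq_getElem_cons (by omega)]

/-- A leftward move of an interior robot preserves the smallest enclosing segment,
keeps the configuration asymmetric and keeps the tail the tail:
the string read from the tail end stays strictly lexicographically smaller. -/
theorem inner_left_move_preserves (S : Finset ℤ) (hcard : 3 ≤ S.card)
    (hlex : List.Lex (· < ·) (wordOf S).reverse (wordOf S))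
    (r : ℤ) (hr : r ∈ S) (hmin : lo S < r) (hmax : r < hi S) (hvac : r - 1 ∉ S) :
    lo (insert (r - 1) (S.erase r)) = lo S ∧
    hi (insert (r - 1) (S.erase r)) = hi S ∧
    List.Lex (· < ·) (wordOf (insert (r - 1) (S.erase r))).reverse
      (wordOf (insert (r - 1) (S.erase r))) := by
  have hSne : S.Nonempty := ⟨r, hr⟩
  set S' : Finset ℤ := insert (r - 1) (S.erase r) with hS'def
  have hmemS' : ∀ x : ℤ, x ∈ S' ↔ x = r - 1 ∨ (x ∈ S ∧ x ≠ r) := by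
    intro x; simp [hS'def, Finset.mem_insert, Finset.mem_erase, and_comm]
  have hLeq : lo S = S.min' hSne := lo_eq (S.min'_mem hSne) (fun x hx => S.min'_le x hx)
  have hHeq : hi S = S.max' hSne := hi_eq (S.max'_mem hSne) (fun x hx => S.le_max' x hx)
  have hLmem : lo S ∈ S := by rw [hLeq]; exact S.min'_mem hSne
  have hLle : ∀ x ∈ S, lo S ≤ x := by intro x hx; rw [hLeq]; exact S.min'_le x hx
  have hHmem : hi S ∈ S := by rw [hHeq]; exact S.max'_mem hSne
  have hleH : ∀ x ∈ S, x ≤ hi S := by intro x hx; rw [hHeq]; exact S.le_max' x hx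
  have hLo' : lo S' = lo S := by
    apply lo_eq
    · rw [hmemS']; exact Or.inr ⟨hLmem, ne_of_lt hmin⟩
    · intro x hx; rw [hmemS'] at hx
      rcases hx with rfl | ⟨hx, _⟩
      · omega
      · exact hLle x hx
  have hHi' : hi S' = hi S := by
    apply hi_eq
    · rw [hmemS']; exact Or.inr ⟨hHmem, ne_of_gt hmax⟩
    · intro x hx; rw [hmemS'] at hx
      rcases hx with rfl | ⟨hx, _⟩
      · have := hleH r hr; omega
      · exact hleH x hx
  refine ⟨hLo', hHi', ?_⟩
  set L := lo S with hL
  set H := hi S with hH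
  set n : ℕ := (H - L).toNat + 1 with hn
  set i : ℕ := (r - 1 - L).toNat with hi0
  have hicast : (i : ℤ) = r - 1 - L := by omega
  have hin : i + 1 + 1 ≤ n := by omega
  have hlenS : (wordOf S).length = n := wordOf_length S
  have hlenS' : (wordOf S').length = n := by rw [wordOf_length, hLo', hHi']
  have hgetS : ∀ (k : ℕ) (hk : k < n),
      (wordOf S)[k]'(by omega) = decide ((L + (k : ℤ)) ∈ S) := by
    intro k hk; rw [wordOf_getElem]
  have hgetS' : ∀ (k : ℕ) (hk : k < n),
      (wordOf S')[k]'(by omega) = decide ((L + (k : ℤ)) ∈ S') := by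
    intro k hk; rw [wordOf_getElem, hLo']
  have hSi : (wordOf S)[i]'(by omega) = false := by
    rw [hgetS i (by omega), show L + (i : ℤ) = r - 1 by omega]
    simp [hvac]
  have hSi1 : (wordOf S)[i + 1]'(by omega) = true := by
    rw [hgetS (i + 1) (by omega), show L + ((i + 1 : ℕ) : ℤ) = r by omega]
    simp [hr]
  have hS'i : (wordOf S')[i]'(by omega) = true := by
    rw [hgetS' i (by omega), show L + (i : ℤ) = r - 1 by omega]
    simp [hmemS']
  have hS'i1 : (wordOf S')[i + 1]'(by omega) = false := by
    rw [hgetS' (i + 1) (by omega), show L + ((i + 1 : ℕ) : ℤ) = r by omega,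
      decide_eq_false_iff_not, hmemS']
    push_neg
    exact ⟨by omega, fun _ => rfl⟩
  have hagree : ∀ (k : ℕ) (hk : k < n), k ≠ i → k ≠ i + 1 →
      (wordOf S')[k]'(by omega) = (wordOf S)[k]'(by omega) := by
    intro k hk hk1 hk2
    rw [hgetS k hk, hgetS' k hk, decide_eq_decide, hmemS']
    have h1 : L + (k : ℤ) ≠ r - 1 := by omega
    have h2 : L + (k : ℤ) ≠ r := by omega
    simp [h1, h2]
  set A : List Bool := (wordOf S).take i with hA
  set B : List Bool := (wordOf S).drop (i + 1 + 1) with hB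
  have hdecS : wordOf S = A ++ false :: true :: B := by
    have h := decomp (wordOf S) i (by omega)
    rw [hSi, hSi1] at h
    exact h
  have hA' : (wordOf S').take i = A := by
    apply List.ext_getElem
    · simp [hA, hlenS, hlenS']
    · intro k h1 h2
      simp only [hA, List.getElem_take]
      have hk : k < i := by simp [hlenS'] at h1; omega
      exact hagree k (by omega) (by omega) (by omega)
  have hB' : (wordOf S').drop (i + 1 + 1) = B := by
    apply List.ext_getElem
    · simp [hB, hlenS, hlenS']
    · intro k h1 h2
      simp only [hB, List.getElem_drop]
      have hk : i + 1 + 1 + k < n := by simp [hlenS'] at h1; omega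
      exact hagree (i + 1 + 1 + k) hk (by omega) (by omega)
  have hdecS' : wordOf S' = A ++ true :: false :: B := by
    have h := decomp (wordOf S') i (by omega)
    rw [hS'i, hS'i1, hA', hB'] at h
    exact h
  have h1 : List.Lex (· < ·) (wordOf S) (wordOf S') := by
    rw [hdecS, hdecS']
    exact List.Lex.append_left _ (List.Lex.rel (by decide)) A
  have h2 : List.Lex (· < ·) (wordOf S').reverse (wordOf S).reverse := by
    have e1 : (wordOf S).reverse = B.reverse ++ true :: false :: A.reverse := by
      rw [hdecS]; simp
    have e2 : (wordOf S').reverse = B.reverse ++ false :: true :: A.reverse := by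
      rw [hdecS']; simp
    rw [e1, e2]
    exact List.Lex.append_left _ (List.Lex.rel (by decide)) B.reverse
  exact lexTrans h2 (lexTrans hlex h1)
end

section
/- Let w be a binary word of length n with w(1) = 1 = w(n) and at least three 1's, and assume reverse(w) ≤ w lexicographically. Then for the word w' of length n+1 obtained by inserting a 0 at position n (i.e., w' = w(1)…w(n−1) 0 w(n)), one has reverse(w') < w' strictly. -/
private lemma zero_shift : ∀ (v : List Bool), true ∈ v →
    List.Lex (· < ·) (false :: v) (v ++ [false])
  | [], h => by simp at h
  | true :: t, _ => List.Lex.rel (by decide)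
  | false :: t, h => by
      have ht : true ∈ t := by simpa using h
      exact List.Lex.cons (zero_shift t ht)

private lemma append_lex (s : List Bool) : ∀ (a b : List Bool), a.length = b.length →
    List.Lex (· < ·) a b → List.Lex (· < ·) (a ++ s) (b ++ s)
  | [], b, hl, h => by cases h <;> simp_all
  | x :: a, [], hl, h => by cases h
  | x :: a, y :: b, hl, h => by
      cases h with
      | cons h => exact List.Lex.cons (append_lex s a b (by simpa using hl) h)
      | rel h => exact List.Lex.rel h

private lemma append_lex_rev (s : List Bool) : ∀ (a b : List Bool), a.length = b.length →
    List.Lex (· < ·) (a ++ s) (b ++ s) → a = b ∨ List.Lex (· < ·) a b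
  | [], [], _, _ => Or.inl rfl
  | [], y :: b, hl, _ => by simp at hl
  | x :: a, [], hl, _ => by simp at hl
  | x :: a, y :: b, hl, h => by
      cases h with
      | cons h =>
          rcases append_lex_rev s a b (by simpa using hl) h with h' | h'
          · exact Or.inl (by rw [h'])
          · exact Or.inr (List.Lex.cons h')
      | rel h => exact Or.inr (List.Lex.rel h)

private lemma main_lex (v : List Bool) (hv : true ∈ v)
    (h : v.reverse = v ∨ List.Lex (· < ·) v.reverse v) :
    List.Lex (· < ·) (false :: v.reverse) (v ++ [false]) := by
  rcases h with h | h
  · rw [h]; exact zero_shift v hv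
  · have h1 : List.Lex (· < ·) (false :: v.reverse) (false :: v) := List.Lex.cons h
    exact List.lex_trans (fun h1 h2 => lt_trans h1 h2) h1 (zero_shift v hv)

/-- String-theoretic core of Proposition 2: for a binary word with both endpoints 1,
at least three 1's, and reversal ≤ the word, inserting a 0 before the last letter
makes the reversal strictly smaller than the new word. -/
theorem insert_zero_breaks_tie (w : List Bool)
    (hhead : w.head? = some true) (hlast : w.getLast? = some true)
    (hcount : 3 ≤ w.count true)
    (hle : w.reverse = w ∨ List.Lex (· < ·) w.reverse w) :
    List.Lex (· < ·) (w.dropLast ++ [false, true]).reverse (w.dropLast ++ [false, true]) := by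
  -- peel off the first letter
  cases w with
  | nil => simp at hhead
  | cons a t =>
    simp only [List.head?_cons, Option.some_inj] at hhead
    subst hhead
    rcases t.eq_nil_or_concat with rfl | ⟨v, x, rfl⟩
    · simp at hcount
    · simp only [List.concat_eq_append] at hlast hcount hle ⊢
      -- last letter is true
      have hx : x = true := by
        have : (true :: (v ++ [x])).getLast? = some x := by
          rw [List.getLast?_eq_getLast (l := true :: (v ++ [x])) (by simp)]
          simp [List.getLast_cons, List.getLast_append]
        rw [this] at hlast
        exact Option.some_inj.mp hlast
      subst hx
      -- v contains a true
      have hv : true ∈ v := by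
        have hc : (true :: (v ++ [true])).count true = 2 + v.count true := by
          simp [List.count_append, List.count_cons]
          omega
        rw [hc] at hcount
        have : 0 < v.count true := by omega
        exact List.count_pos_iff.mp this
      -- reversal hypothesis descends to v
      have hrev : v.reverse = v ∨ List.Lex (· < ·) v.reverse v := by
        have hw : (true :: (v ++ [true])).reverse = true :: (v.reverse ++ [true]) := by
          simp
        rcases hle with h | h
        · left
          rw [hw] at h
          have := List.cons.injEq .. ▸ h
          have h2 : v.reverse ++ [true] = v ++ [true] := by
            injection h with _ h2
          exact List.append_cancel_right h2
        · rw [hw] at h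
          have h2 : List.Lex (· < ·) (v.reverse ++ [true]) (v ++ [true]) := by
            cases h with
            | cons h => exact h
            | rel h => exact absurd h (by simp)
          exact append_lex_rev [true] v.reverse v (by simp) h2
      -- assemble
      have hdrop : (true :: (v ++ [true])).dropLast = true :: v := by
        rw [show true :: (v ++ [true]) = (true :: v) ++ [true] by simp, List.dropLast_concat]
      rw [hdrop]
      have hLHS : ((true :: v) ++ [false, true]).reverse
          = true :: ((false :: v.reverse) ++ [true]) := by
        simp
      have hRHS : (true :: v) ++ [false, true] = true :: ((v ++ [false]) ++ [true]) := by
        simp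
      rw [hLHS, hRHS]
      exact List.Lex.cons (append_lex [true] _ _ (by simp) (main_lex v hv hrev))
end

section
/- Let w be a binary word of length n ≥ 3 that is a palindrome (w = reverse(w)), with w(1) = w(n) = 1 and at least three 1's. Then the word w' = w(1)…w(n−1) 0 w(n) of length n+1 obtained by inserting a 0 before the last letter is not a palindrome. -/
lemma shift_all_eq {α : Type*} (a : α) : ∀ (l : List α), l ++ [a] = a :: l → ∀ x ∈ l, x = a := by
  intro l
  induction l with
  | nil => intro _ x hx; cases hx
  | cons b t ih =>
    intro h x hx
    simp only [List.cons_append, List.cons.injEq] at h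
    obtain ⟨rfl, h2⟩ := h
    rcases List.mem_cons.mp hx with h | h
    · exact h
    · exact ih h2 x h

/-- If a binary palindrome of length ≥ 3 has 1's at both ends and at least three 1's,
then inserting a 0 before its last letter yields a non-palindrome. -/
theorem palindrome_broken_by_tail_move (w : List Bool)
    (hpal : w.reverse = w) (hlen : 3 ≤ w.length)
    (hhead : w.head? = some true) (hlast : w.getLast? = some true)
    (hcount : 3 ≤ w.count true) :
    (w.dropLast ++ [false, true]).reverse ≠ w.dropLast ++ [false, true] := by
  obtain ⟨a, t, rfl⟩ : ∃ a t, w = a :: t := by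
    cases w with
    | nil => simp at hhead
    | cons a t => exact ⟨a, t, rfl⟩
  simp only [List.head?_cons, Option.some.injEq] at hhead
  subst hhead
  have ht : t ≠ [] := by intro h; subst h; simp at hlen
  obtain ⟨m, b, rfl⟩ : ∃ m b, t = m ++ [b] := by
    rcases List.eq_nil_or_concat t with h | ⟨m, b, h⟩
    · exact absurd h ht
    · exact ⟨m, b, by simpa using h⟩
  have hb : b = true := by
    have h1 : (true :: (m ++ [b])).getLast? = some b := by
      rw [show true :: (m ++ [b]) = (true :: m) ++ [b] from rfl, List.getLast?_concat]
    rw [h1] at hlast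
    exact Option.some_injective _ hlast
  subst hb
  have hm : m.reverse = m := by
    simpa [List.reverse_append] using hpal
  have hdrop : (true :: (m ++ [true])).dropLast = true :: m := by
    rw [show true :: (m ++ [true]) = (true :: m) ++ [true] from rfl, List.dropLast_concat]
  intro hcontra
  rw [hdrop] at hcontra
  have key : m ++ [false] = false :: m := by
    simp only [List.reverse_append, List.reverse_cons, List.reverse_nil,
      List.nil_append, List.cons_append, List.append_assoc, List.cons.injEq,
      true_and] at hcontra
    have h3 : (false :: m.reverse) ++ [true] = (m ++ [false]) ++ [true] := by
      simpa using hcontra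
    have h4 := List.append_left_inj ([true]) |>.mp h3
    rw [hm] at h4
    exact h4.symm
  have hall : ∀ x ∈ m, x = false := shift_all_eq false m key
  have hcnt : m.count true = 0 := by
    rw [List.count_eq_zero]
    intro h
    have := hall true h
    simp at this
  simp only [List.count_cons, List.count_append, hcnt] at hcount
  simp at hcount
end

section
/- Let S ⊆ ℤ² be a finite set contained in an axis-aligned rectangle R of dimensions m × n with m, n ≥ 2 (the smallest enclosing rectangle), and for each of the four corners define the boustrophedon occupancy string scanning column-by-column as in the APF algorithm. If two of these four corner strings (for m > n) are equal, then S admits a nontrivial symmetry: a reflection in a horizontal or vertical axis, or a rotation by 180°, mapping S onto itself. -/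
def xlo (S : Finset (ℤ × ℤ)) : ℤ := WithTop.untopD 0 (S.image Prod.fst).min
def xhi (S : Finset (ℤ × ℤ)) : ℤ := WithBot.unbotD 0 (S.image Prod.fst).max
def ylo (S : Finset (ℤ × ℤ)) : ℤ := WithTop.untopD 0 (S.image Prod.snd).min
def yhi (S : Finset (ℤ × ℤ)) : ℤ := WithBot.unbotD 0 (S.image Prod.snd).max

/-- Number of grid lines of the SER in the long (here: vertical) direction. -/
def mDim (S : Finset (ℤ × ℤ)) : ℕ := (yhi S - ylo S).toNat + 1
/-- Number of grid lines of the SER in the short (here: horizontal) direction. -/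
def nDim (S : Finset (ℤ × ℤ)) : ℕ := (xhi S - xlo S).toNat + 1

/-- Boustrophedon occupancy string: starting at corner `c`, scan `m` successive lines
in direction `dL`, each line of `n` nodes in direction `dS`, alternating the direction
of scanning of the lines (snake order); record `true` for occupied nodes. -/
def snake (S : Finset (ℤ × ℤ)) (c dL dS : ℤ × ℤ) (m n : ℕ) : List Bool :=
  ((List.range m).map fun i =>
    (List.range n).map fun j =>
      let j' : ℕ := if i % 2 = 0 then j else n - 1 - j
      decide ((c.1 + (i : ℤ) * dL.1 + (j' : ℤ) * dS.1,
               c.2 + (i : ℤ) * dL.2 + (j' : ℤ) * dS.2) ∈ S)).flatten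

def lamAB (S : Finset (ℤ × ℤ)) : List Bool := snake S (xlo S, ylo S) (0, 1) (1, 0) (mDim S) (nDim S)
def lamBA (S : Finset (ℤ × ℤ)) : List Bool := snake S (xhi S, ylo S) (0, 1) (-1, 0) (mDim S) (nDim S)
def lamDC (S : Finset (ℤ × ℤ)) : List Bool := snake S (xlo S, yhi S) (0, -1) (1, 0) (mDim S) (nDim S)
def lamCD (S : Finset (ℤ × ℤ)) : List Bool := snake S (xhi S, yhi S) (0, -1) (-1, 0) (mDim S) (nDim S)

def reflH (S : Finset (ℤ × ℤ)) : Prop := ∃ c : ℤ, ∀ p : ℤ × ℤ, p ∈ S ↔ (p.1, c - p.2) ∈ S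
def reflV (S : Finset (ℤ × ℤ)) : Prop := ∃ c : ℤ, ∀ p : ℤ × ℤ, p ∈ S ↔ (c - p.1, p.2) ∈ S
def rot180 (S : Finset (ℤ × ℤ)) : Prop := ∃ a b : ℤ, ∀ p : ℤ × ℤ, p ∈ S ↔ (a - p.1, b - p.2) ∈ S

lemma bounds {S : Finset (ℤ × ℤ)} {p : ℤ × ℤ} (hp : p ∈ S) :
    xlo S ≤ p.1 ∧ p.1 ≤ xhi S ∧ ylo S ≤ p.2 ∧ p.2 ≤ yhi S := by
  have h1 := Finset.min_le (Finset.mem_image_of_mem Prod.fst hp)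
  have h2 := Finset.le_max (Finset.mem_image_of_mem Prod.fst hp)
  have h3 := Finset.min_le (Finset.mem_image_of_mem Prod.snd hp)
  have h4 := Finset.le_max (Finset.mem_image_of_mem Prod.snd hp)
  obtain ⟨a, ha⟩ := Finset.min_of_mem (Finset.mem_image_of_mem Prod.fst hp)
  obtain ⟨b, hb⟩ := Finset.max_of_mem (Finset.mem_image_of_mem Prod.fst hp)
  obtain ⟨c, hc⟩ := Finset.min_of_mem (Finset.mem_image_of_mem Prod.snd hp)
  obtain ⟨d, hd⟩ := Finset.max_of_mem (Finset.mem_image_of_mem Prod.snd hp)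
  rw [ha] at h1; rw [hb] at h2; rw [hc] at h3; rw [hd] at h4
  refine ⟨?_, ?_, ?_, ?_⟩
  · rw [xlo, ha]; exact_mod_cast h1
  · rw [xhi, hb]; exact_mod_cast h2
  · rw [ylo, hc]; exact_mod_cast h3
  · rw [yhi, hd]; exact_mod_cast h4

lemma snake_eq (S : Finset (ℤ × ℤ)) (c dL dS : ℤ × ℤ) (m n : ℕ) :
    snake S c dL dS m n =
    ((List.range m).map fun i : ℕ =>
      (List.range n).map fun j : ℕ =>
        decide ((c.1 + (i : ℤ) * dL.1 + ((if i % 2 = 0 then j else n - 1 - j : ℕ) : ℤ) * dS.1,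
                 c.2 + (i : ℤ) * dL.2 + ((if i % 2 = 0 then j else n - 1 - j : ℕ) : ℤ) * dS.2) ∈ S)).flatten := by
  unfold snake
  congr 1
  have hdo : (do let a ← List.range m; pure ((a : ℤ)) : List ℤ)
      = (List.range m).map (fun a : ℕ => (a : ℤ)) := by
    simp
    induction (List.range m) with
    | nil => rfl
    | cons a t iht => rw [List.flatMap_cons, iht]; rfl
  rw [hdo, List.map_map]
  refine List.map_eq_map_iff.mpr (fun i _ => List.map_eq_map_iff.mpr (fun j _ => ?_))
  have hcond : ((i : ℤ) % 2 = 0) ↔ (i % 2 = 0) := by omega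
  simp only [Function.comp_apply, hcond]

lemma join_inj {α : Type*} {n : ℕ} : ∀ (l1 l2 : List (List α)),
    (∀ x ∈ l1, x.length = n) → (∀ x ∈ l2, x.length = n) →
    l1.length = l2.length → l1.flatten = l2.flatten → l1 = l2 := by
  intro l1
  induction l1 with
  | nil => intro l2 _ _ hl _; exact (List.length_eq_zero_iff.mp hl.symm).symm ▸ rfl
  | cons a t ih =>
    intro l2 h1 h2 hl hj
    cases l2 with
    | nil => simp at hl
    | cons b t2 =>
      simp only [List.flatten_cons] at hj
      have hab := List.append_inj hj (by rw [h1 a (by simp), h2 b (by simp)])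
      rw [hab.1, ih t2 (fun x hx => h1 x (by simp [hx]))
        (fun x hx => h2 x (by simp [hx])) (by simpa using hl) hab.2]

lemma snake_pt {S : Finset (ℤ × ℤ)} {c c' dL dL' dS dS' : ℤ × ℤ} {m n : ℕ}
    (h : snake S c dL dS m n = snake S c' dL' dS' m n)
    {i k : ℕ} (hi : i < m) (hk : k < n) :
    ((c.1 + (i : ℤ) * dL.1 + (k : ℤ) * dS.1, c.2 + (i : ℤ) * dL.2 + (k : ℤ) * dS.2) ∈ S ↔
     (c'.1 + (i : ℤ) * dL'.1 + (k : ℤ) * dS'.1, c'.2 + (i : ℤ) * dL'.2 + (k : ℤ) * dS'.2) ∈ S) := by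
  rw [snake_eq, snake_eq] at h
  have hmap := join_inj (n := n) _ _
    (fun x hx => by obtain ⟨a, -, rfl⟩ := List.mem_map.mp hx; simp)
    (fun x hx => by obtain ⟨a, -, rfl⟩ := List.mem_map.mp hx; simp)
    (by rw [List.length_map, List.length_map]) h
  rw [List.map_eq_map_iff] at hmap
  have hline := hmap i (List.mem_range.mpr hi)
  rw [List.map_eq_map_iff] at hline
  set j : ℕ := if i % 2 = 0 then k else n - 1 - k with hjdef
  have hj : j < n := by by_cases h2 : i % 2 = 0 <;> simp [hjdef, h2] <;> omega
  have hpt := hline j (List.mem_range.mpr hj)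
  have hj' : (if i % 2 = 0 then j else n - 1 - j) = k := by
    by_cases h2 : i % 2 = 0 <;> simp [hjdef, h2] <;> omega
  rw [hj'] at hpt
  exact decide_eq_decide.mp hpt

lemma sym_iff {S : Finset (ℤ × ℤ)} (F : ℤ × ℤ → ℤ × ℤ) (hinv : ∀ p, F (F p) = p)
    (h : ∀ p ∈ S, F p ∈ S) : ∀ p, p ∈ S ↔ F p ∈ S :=
  fun p => ⟨h p, fun hq => by have := h _ hq; rwa [hinv] at this⟩

/-- If two of the four boustrophedon corner strings of a configuration whose SER is a
proper (non-square) rectangle coincide, then the configuration has a nontrivial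
symmetry: a reflection in a horizontal or vertical axis, or a rotation by 180°. -/
theorem equal_corner_strings_give_symmetry (S : Finset (ℤ × ℤ)) (hS : S.Nonempty)
    (hn : 2 ≤ nDim S) (hmn : nDim S < mDim S)
    (heq : lamAB S = lamBA S ∨ lamAB S = lamCD S ∨ lamAB S = lamDC S ∨
           lamBA S = lamCD S ∨ lamBA S = lamDC S ∨ lamCD S = lamDC S) :
    reflH S ∨ reflV S ∨ rot180 S := by
  rcases heq with h | h | h | h | h | h
  · -- lamAB = lamBA : vertical reflection
    refine Or.inr (Or.inl ⟨xlo S + xhi S,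
      sym_iff (fun q => (xlo S + xhi S - q.1, q.2)) (fun q => by simp) ?_⟩)
    intro p hp
    obtain ⟨h1, h2, h3, h4⟩ := bounds hp
    have hpt := snake_pt h (i := (p.2 - ylo S).toNat) (k := (p.1 - xlo S).toNat)
      (by unfold mDim; omega) (by unfold nDim; omega)
    simp only [mul_zero, mul_one, mul_neg, add_zero] at hpt
    have e1 : xlo S + ((p.1 - xlo S).toNat : ℤ) = p.1 := by omega
    have e2 : ylo S + ((p.2 - ylo S).toNat : ℤ) = p.2 := by omega
    have e3 : xhi S + -((p.1 - xlo S).toNat : ℤ) = xlo S + xhi S - p.1 := by omega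
    simp only [e1, e2, e3, Prod.mk.eta] at hpt
    simpa using hpt.mp hp
  · -- lamAB = lamCD : rotation by 180°
    refine Or.inr (Or.inr ⟨xlo S + xhi S, ylo S + yhi S,
      sym_iff (fun q => (xlo S + xhi S - q.1, ylo S + yhi S - q.2)) (fun q => by simp) ?_⟩)
    intro p hp
    obtain ⟨h1, h2, h3, h4⟩ := bounds hp
    have hpt := snake_pt h (i := (p.2 - ylo S).toNat) (k := (p.1 - xlo S).toNat)
      (by unfold mDim; omega) (by unfold nDim; omega)
    simp only [mul_zero, mul_one, mul_neg, add_zero] at hpt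
    have e1 : xlo S + ((p.1 - xlo S).toNat : ℤ) = p.1 := by omega
    have e2 : ylo S + ((p.2 - ylo S).toNat : ℤ) = p.2 := by omega
    have e3 : xhi S + -((p.1 - xlo S).toNat : ℤ) = xlo S + xhi S - p.1 := by omega
    have e4 : yhi S + -((p.2 - ylo S).toNat : ℤ) = ylo S + yhi S - p.2 := by omega
    simp only [e1, e2, e3, e4, Prod.mk.eta] at hpt
    simpa using hpt.mp hp
  · -- lamAB = lamDC : horizontal reflection
    refine Or.inl ⟨ylo S + yhi S,
      sym_iff (fun q => (q.1, ylo S + yhi S - q.2)) (fun q => by simp) ?_⟩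
    intro p hp
    obtain ⟨h1, h2, h3, h4⟩ := bounds hp
    have hpt := snake_pt h (i := (p.2 - ylo S).toNat) (k := (p.1 - xlo S).toNat)
      (by unfold mDim; omega) (by unfold nDim; omega)
    simp only [mul_zero, mul_one, mul_neg, add_zero] at hpt
    have e1 : xlo S + ((p.1 - xlo S).toNat : ℤ) = p.1 := by omega
    have e2 : ylo S + ((p.2 - ylo S).toNat : ℤ) = p.2 := by omega
    have e4 : yhi S + -((p.2 - ylo S).toNat : ℤ) = ylo S + yhi S - p.2 := by omega
    simp only [e1, e2, e4, Prod.mk.eta] at hpt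
    simpa using hpt.mp hp
  · -- lamBA = lamCD : horizontal reflection
    refine Or.inl ⟨ylo S + yhi S,
      sym_iff (fun q => (q.1, ylo S + yhi S - q.2)) (fun q => by simp) ?_⟩
    intro p hp
    obtain ⟨h1, h2, h3, h4⟩ := bounds hp
    have hpt := snake_pt h (i := (p.2 - ylo S).toNat) (k := (xhi S - p.1).toNat)
      (by unfold mDim; omega) (by unfold nDim; omega)
    simp only [mul_zero, mul_one, mul_neg, add_zero] at hpt
    have e1 : xhi S + -((xhi S - p.1).toNat : ℤ) = p.1 := by omega
    have e2 : ylo S + ((p.2 - ylo S).toNat : ℤ) = p.2 := by omega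
    have e4 : yhi S + -((p.2 - ylo S).toNat : ℤ) = ylo S + yhi S - p.2 := by omega
    simp only [e1, e2, e4, Prod.mk.eta] at hpt
    simpa using hpt.mp hp
  · -- lamBA = lamDC : rotation by 180°
    refine Or.inr (Or.inr ⟨xlo S + xhi S, ylo S + yhi S,
      sym_iff (fun q => (xlo S + xhi S - q.1, ylo S + yhi S - q.2)) (fun q => by simp) ?_⟩)
    intro p hp
    obtain ⟨h1, h2, h3, h4⟩ := bounds hp
    have hpt := snake_pt h (i := (p.2 - ylo S).toNat) (k := (xhi S - p.1).toNat)
      (by unfold mDim; omega) (by unfold nDim; omega)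
    simp only [mul_zero, mul_one, mul_neg, add_zero] at hpt
    have e1 : xhi S + -((xhi S - p.1).toNat : ℤ) = p.1 := by omega
    have e2 : ylo S + ((p.2 - ylo S).toNat : ℤ) = p.2 := by omega
    have e3 : xlo S + ((xhi S - p.1).toNat : ℤ) = xlo S + xhi S - p.1 := by omega
    have e4 : yhi S + -((p.2 - ylo S).toNat : ℤ) = ylo S + yhi S - p.2 := by omega
    simp only [e1, e2, e3, e4, Prod.mk.eta] at hpt
    simpa using hpt.mp hp
  · -- lamCD = lamDC : vertical reflection
    refine Or.inr (Or.inl ⟨xlo S + xhi S,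
      sym_iff (fun q => (xlo S + xhi S - q.1, q.2)) (fun q => by simp) ?_⟩)
    intro p hp
    obtain ⟨h1, h2, h3, h4⟩ := bounds hp
    have hpt := snake_pt h (i := (yhi S - p.2).toNat) (k := (xhi S - p.1).toNat)
      (by unfold mDim; omega) (by unfold nDim; omega)
    simp only [mul_zero, mul_one, mul_neg, add_zero] at hpt
    have e1 : xhi S + -((xhi S - p.1).toNat : ℤ) = p.1 := by omega
    have e2 : yhi S + -((yhi S - p.2).toNat : ℤ) = p.2 := by omega
    have e3 : xlo S + ((xhi S - p.1).toNat : ℤ) = xlo S + xhi S - p.1 := by omega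
    simp only [e1, e2, e3, Prod.mk.eta] at hpt
    simpa using hpt.mp hp
end

section
/- Let S ⊆ ℤ² be a finite set with |S| ≥ 2 whose only symmetry (among reflections in horizontal/vertical/diagonal axes and rotations by 90° or 180°) is the identity. If the smallest enclosing rectangle of S has dimensions m × n with m > n > 1, then the four boustrophedon corner strings λ_{AB}, λ_{BA}, λ_{CD}, λ_{DC} are pairwise distinct, and hence there is a unique lexicographically largest one. -/
def reflDiag (S : Finset (ℤ × ℤ)) : Prop := ∃ c : ℤ, ∀ p : ℤ × ℤ, p ∈ S ↔ (p.2 + c, p.1 - c) ∈ S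
def reflAnti (S : Finset (ℤ × ℤ)) : Prop := ∃ a : ℤ, ∀ p : ℤ × ℤ, p ∈ S ↔ (a - p.2, a - p.1) ∈ S
def rot90 (S : Finset (ℤ × ℤ)) : Prop := ∃ a b : ℤ, ∀ p : ℤ × ℤ, p ∈ S ↔ (a - p.2, b + p.1) ∈ S
section Aux

lemma join_len {α : Type*} (n : ℕ) (f : ℕ → List α) (hf : ∀ i, (f i).length = n) :
    ∀ m, ((List.range m).map f).flatten.length = m * n := by
  intro m
  induction m with
  | zero => simp
  | succ m ih =>
    rw [List.range_succ, List.map_append]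
    rw [show ((List.map f (List.range m) ++ List.map f [m]).flatten)
        = (List.map f (List.range m)).flatten ++ (List.map f [m]).flatten from
      List.flatten_append]
    simp [ih, hf, Nat.succ_mul]

lemma join_map_range_inj {α : Type*} {n : ℕ} {f g : ℕ → List α}
    (hf : ∀ i, (f i).length = n) (hg : ∀ i, (g i).length = n) :
    ∀ m, ((List.range m).map f).flatten = ((List.range m).map g).flatten →
      ∀ i < m, f i = g i := by
  intro m
  induction m with
  | zero => simp
  | succ m ih =>
    intro h i hi
    rw [List.range_succ, List.map_append, List.map_append] at h
    rw [show ((List.map f (List.range m) ++ List.map f [m]).flatten)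
        = (List.map f (List.range m)).flatten ++ (List.map f [m]).flatten from
      List.flatten_append] at h
    rw [show ((List.map g (List.range m) ++ List.map g [m]).flatten)
        = (List.map g (List.range m)).flatten ++ (List.map g [m]).flatten from
      List.flatten_append] at h
    have hlen : ((List.range m).map f).flatten.length = ((List.range m).map g).flatten.length := by
      rw [join_len n f hf, join_len n g hg]
    obtain ⟨h1, h2⟩ := List.append_inj h hlen
    rcases Nat.lt_succ_iff_lt_or_eq.mp hi with hi' | rfl
    · exact ih h1 i hi'
    · simpa using h2

lemma map_range_inj {α : Type*} {n : ℕ} {f g : ℕ → α}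
    (h : (List.range n).map f = (List.range n).map g) : ∀ j < n, f j = g j := by
  intro j hj
  have := congrArg (fun l => l[j]?) h
  simpa [List.getElem?_map, List.getElem?_range hj] using this

lemma snake_normal (S : Finset (ℤ × ℤ)) (c dL dS : ℤ × ℤ) (m n : ℕ) :
    snake S c dL dS m n = ((List.range m).map fun (i : ℕ) =>
    (List.range n).map fun (j : ℕ) =>
      decide ((c.1 + (i : ℤ) * dL.1 + ((if (i : ℤ) % 2 = 0 then j else n - 1 - j : ℕ) : ℤ) * dS.1,
               c.2 + (i : ℤ) * dL.2 + ((if (i : ℤ) % 2 = 0 then j else n - 1 - j : ℕ) : ℤ) * dS.2) ∈ S)).flatten := by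
  unfold snake
  simp only [bind_pure_comp, List.map_eq_map, List.map_map]
  rfl

lemma snake_inj {S : Finset (ℤ × ℤ)} {c₁ c₂ dL₁ dL₂ dS₁ dS₂ : ℤ × ℤ} {m n : ℕ}
    (h : snake S c₁ dL₁ dS₁ m n = snake S c₂ dL₂ dS₂ m n) :
    ∀ i < m, ∀ k < n,
      ((c₁.1 + (i : ℤ) * dL₁.1 + (k : ℤ) * dS₁.1,
        c₁.2 + (i : ℤ) * dL₁.2 + (k : ℤ) * dS₁.2) ∈ S ↔
       (c₂.1 + (i : ℤ) * dL₂.1 + (k : ℤ) * dS₂.1,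
        c₂.2 + (i : ℤ) * dL₂.2 + (k : ℤ) * dS₂.2) ∈ S) := by
  intro i hi k hk
  rw [snake_normal, snake_normal] at h
  have hrow := join_map_range_inj (n := n) (fun i => by simp) (fun i => by simp) m h i hi
  set j : ℕ := if (i : ℤ) % 2 = 0 then k else n - 1 - k with hj
  have hjn : j < n := by rw [hj]; split <;> omega
  have hcol := map_range_inj hrow j hjn
  have hj' : (if (i : ℤ) % 2 = 0 then j else n - 1 - j) = k := by
    rw [hj]; split <;> omega
  simp only [hj'] at hcol
  exact decide_eq_decide.mp hcol

lemma mem_bounds {S : Finset (ℤ × ℤ)} (hS : S.Nonempty) {p : ℤ × ℤ} (hp : p ∈ S) :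
    xlo S ≤ p.1 ∧ p.1 ≤ xhi S ∧ ylo S ≤ p.2 ∧ p.2 ≤ yhi S := by
  have h1 : (S.image Prod.fst).Nonempty := hS.image _
  have h2 : (S.image Prod.snd).Nonempty := hS.image _
  obtain ⟨a, ha⟩ := Finset.max_of_nonempty h1
  obtain ⟨b, hb⟩ := Finset.min_of_nonempty h1
  obtain ⟨c', hc⟩ := Finset.max_of_nonempty h2
  obtain ⟨d, hd⟩ := Finset.min_of_nonempty h2
  have hxm : p.1 ∈ S.image Prod.fst := Finset.mem_image_of_mem _ hp
  have hym : p.2 ∈ S.image Prod.snd := Finset.mem_image_of_mem _ hp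
  have e1 := Finset.le_max hxm; have e2 := Finset.min_le hxm
  have e3 := Finset.le_max hym; have e4 := Finset.min_le hym
  rw [ha] at e1; rw [hb] at e2; rw [hc] at e3; rw [hd] at e4
  have ea : xhi S = a := by unfold xhi; rw [ha]; rfl
  have eb : xlo S = b := by unfold xlo; rw [hb]; rfl
  have ec : yhi S = c' := by unfold yhi; rw [hc]; rfl
  have ed : ylo S = d := by unfold ylo; rw [hd]; rfl
  rw [ea, eb, ec, ed]
  exact ⟨by exact_mod_cast e2, by exact_mod_cast e1, by exact_mod_cast e4, by exact_mod_cast e3⟩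

lemma invol_mem {S : Finset (ℤ × ℤ)} {T : ℤ × ℤ → ℤ × ℤ} (hT : ∀ p, T (T p) = p)
    (h : ∀ p ∈ S, T p ∈ S) : ∀ p, p ∈ S ↔ T p ∈ S :=
  fun p => ⟨fun hp => h p hp, fun hq => by have := h _ hq; rwa [hT] at this⟩

end Aux

lemma pair_AB_BA {S : Finset (ℤ × ℤ)} (hS : S.Nonempty) (h : lamAB S = lamBA S) : reflV S := by
  have key := snake_inj (h : snake S (xlo S, ylo S) (0, 1) (1, 0) (mDim S) (nDim S) =
    snake S (xhi S, ylo S) (0, 1) (-1, 0) (mDim S) (nDim S))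
  refine ⟨xlo S + xhi S, invol_mem (T := fun p => (xlo S + xhi S - p.1, p.2))
    (fun p => by simp) ?_⟩
  intro p hp
  obtain ⟨b1, b2, b3, b4⟩ := mem_bounds hS hp
  have hi : (p.2 - ylo S).toNat < mDim S := by unfold mDim; omega
  have hk : (p.1 - xlo S).toNat < nDim S := by unfold nDim; omega
  have hm := key _ hi _ hk
  simp only [mul_zero, mul_one, add_zero, mul_neg_one] at hm
  have e1 : xlo S + ((p.1 - xlo S).toNat : ℤ) = p.1 := by omega
  have e2 : ylo S + ((p.2 - ylo S).toNat : ℤ) = p.2 := by omega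
  have e3 : xhi S + -((p.1 - xlo S).toNat : ℤ) = xlo S + xhi S - p.1 := by omega
  rw [e1, e2, e3] at hm
  exact hm.mp hp

lemma pair_CD_DC {S : Finset (ℤ × ℤ)} (hS : S.Nonempty) (h : lamCD S = lamDC S) : reflV S := by
  have key := snake_inj (h : snake S (xhi S, yhi S) (0, -1) (-1, 0) (mDim S) (nDim S) =
    snake S (xlo S, yhi S) (0, -1) (1, 0) (mDim S) (nDim S))
  refine ⟨xlo S + xhi S, invol_mem (T := fun p => (xlo S + xhi S - p.1, p.2))
    (fun p => by simp) ?_⟩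
  intro p hp
  obtain ⟨b1, b2, b3, b4⟩ := mem_bounds hS hp
  have hi : (yhi S - p.2).toNat < mDim S := by unfold mDim; omega
  have hk : (xhi S - p.1).toNat < nDim S := by unfold nDim; omega
  have hm := key _ hi _ hk
  simp only [mul_zero, mul_one, add_zero, mul_neg_one] at hm
  have e1 : xhi S + -((xhi S - p.1).toNat : ℤ) = p.1 := by omega
  have e2 : yhi S + -((yhi S - p.2).toNat : ℤ) = p.2 := by omega
  have e3 : xlo S + ((xhi S - p.1).toNat : ℤ) = xlo S + xhi S - p.1 := by omega
  rw [e1, e2, e3] at hm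
  exact hm.mp hp

lemma pair_AB_DC {S : Finset (ℤ × ℤ)} (hS : S.Nonempty) (h : lamAB S = lamDC S) : reflH S := by
  have key := snake_inj (h : snake S (xlo S, ylo S) (0, 1) (1, 0) (mDim S) (nDim S) =
    snake S (xlo S, yhi S) (0, -1) (1, 0) (mDim S) (nDim S))
  refine ⟨ylo S + yhi S, invol_mem (T := fun p => (p.1, ylo S + yhi S - p.2))
    (fun p => by simp) ?_⟩
  intro p hp
  obtain ⟨b1, b2, b3, b4⟩ := mem_bounds hS hp
  have hi : (p.2 - ylo S).toNat < mDim S := by unfold mDim; omega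
  have hk : (p.1 - xlo S).toNat < nDim S := by unfold nDim; omega
  have hm := key _ hi _ hk
  simp only [mul_zero, mul_one, add_zero, mul_neg_one] at hm
  have e1 : xlo S + ((p.1 - xlo S).toNat : ℤ) = p.1 := by omega
  have e2 : ylo S + ((p.2 - ylo S).toNat : ℤ) = p.2 := by omega
  have e3 : yhi S + -((p.2 - ylo S).toNat : ℤ) = ylo S + yhi S - p.2 := by omega
  rw [e1, e2, e3] at hm
  exact hm.mp hp

lemma pair_BA_CD {S : Finset (ℤ × ℤ)} (hS : S.Nonempty) (h : lamBA S = lamCD S) : reflH S := by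
  have key := snake_inj (h : snake S (xhi S, ylo S) (0, 1) (-1, 0) (mDim S) (nDim S) =
    snake S (xhi S, yhi S) (0, -1) (-1, 0) (mDim S) (nDim S))
  refine ⟨ylo S + yhi S, invol_mem (T := fun p => (p.1, ylo S + yhi S - p.2))
    (fun p => by simp) ?_⟩
  intro p hp
  obtain ⟨b1, b2, b3, b4⟩ := mem_bounds hS hp
  have hi : (p.2 - ylo S).toNat < mDim S := by unfold mDim; omega
  have hk : (xhi S - p.1).toNat < nDim S := by unfold nDim; omega
  have hm := key _ hi _ hk
  simp only [mul_zero, mul_one, add_zero, mul_neg_one] at hm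
  have e1 : xhi S + -((xhi S - p.1).toNat : ℤ) = p.1 := by omega
  have e2 : ylo S + ((p.2 - ylo S).toNat : ℤ) = p.2 := by omega
  have e3 : yhi S + -((p.2 - ylo S).toNat : ℤ) = ylo S + yhi S - p.2 := by omega
  rw [e1, e2, e3] at hm
  exact hm.mp hp

lemma pair_AB_CD {S : Finset (ℤ × ℤ)} (hS : S.Nonempty) (h : lamAB S = lamCD S) : rot180 S := by
  have key := snake_inj (h : snake S (xlo S, ylo S) (0, 1) (1, 0) (mDim S) (nDim S) =
    snake S (xhi S, yhi S) (0, -1) (-1, 0) (mDim S) (nDim S))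
  refine ⟨xlo S + xhi S, ylo S + yhi S,
    invol_mem (T := fun p => (xlo S + xhi S - p.1, ylo S + yhi S - p.2))
    (fun p => by simp) ?_⟩
  intro p hp
  obtain ⟨b1, b2, b3, b4⟩ := mem_bounds hS hp
  have hi : (p.2 - ylo S).toNat < mDim S := by unfold mDim; omega
  have hk : (p.1 - xlo S).toNat < nDim S := by unfold nDim; omega
  have hm := key _ hi _ hk
  simp only [mul_zero, mul_one, add_zero, mul_neg_one] at hm
  have e1 : xlo S + ((p.1 - xlo S).toNat : ℤ) = p.1 := by omega
  have e2 : ylo S + ((p.2 - ylo S).toNat : ℤ) = p.2 := by omega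
  have e3 : xhi S + -((p.1 - xlo S).toNat : ℤ) = xlo S + xhi S - p.1 := by omega
  have e4 : yhi S + -((p.2 - ylo S).toNat : ℤ) = ylo S + yhi S - p.2 := by omega
  rw [e1, e2, e3, e4] at hm
  exact hm.mp hp

lemma pair_BA_DC {S : Finset (ℤ × ℤ)} (hS : S.Nonempty) (h : lamBA S = lamDC S) : rot180 S := by
  have key := snake_inj (h : snake S (xhi S, ylo S) (0, 1) (-1, 0) (mDim S) (nDim S) =
    snake S (xlo S, yhi S) (0, -1) (1, 0) (mDim S) (nDim S))
  refine ⟨xlo S + xhi S, ylo S + yhi S,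
    invol_mem (T := fun p => (xlo S + xhi S - p.1, ylo S + yhi S - p.2))
    (fun p => by simp) ?_⟩
  intro p hp
  obtain ⟨b1, b2, b3, b4⟩ := mem_bounds hS hp
  have hi : (p.2 - ylo S).toNat < mDim S := by unfold mDim; omega
  have hk : (xhi S - p.1).toNat < nDim S := by unfold nDim; omega
  have hm := key _ hi _ hk
  simp only [mul_zero, mul_one, add_zero, mul_neg_one] at hm
  have e1 : xhi S + -((xhi S - p.1).toNat : ℤ) = p.1 := by omega
  have e2 : ylo S + ((p.2 - ylo S).toNat : ℤ) = p.2 := by omega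
  have e3 : xlo S + ((xhi S - p.1).toNat : ℤ) = xlo S + xhi S - p.1 := by omega
  have e4 : yhi S + -((p.2 - ylo S).toNat : ℤ) = ylo S + yhi S - p.2 := by omega
  rw [e1, e2, e3, e4] at hm
  exact hm.mp hp

lemma exists_unique_max {α : Type*} [LinearOrder α] [DecidableEq α] (l : List α) (hl : l ≠ []) :
    ∃! w, w ∈ l ∧ ∀ u ∈ l, u ≠ w → u < w := by
  have hne : l.toFinset.Nonempty := by
    obtain ⟨a, ha⟩ := List.exists_mem_of_ne_nil l hl
    exact ⟨a, List.mem_toFinset.mpr ha⟩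
  set w := l.toFinset.max' hne with hw
  have hwl : w ∈ l := List.mem_toFinset.mp (l.toFinset.max'_mem hne)
  refine ⟨w, ⟨hwl, fun u hu hne' => lt_of_le_of_ne (Finset.le_max' _ _ (List.mem_toFinset.mpr hu)) hne'⟩, ?_⟩
  rintro w' ⟨hm', hp'⟩
  by_contra hne'
  exact absurd (hp' w hwl fun e => hne' e.symm)
    (not_lt_of_gt ((fun e => lt_of_le_of_ne (Finset.le_max' _ _ (List.mem_toFinset.mpr hm')) e) hne'))

/-- For an asymmetric configuration whose SER is a proper rectangle (m > n > 1),
the four boustrophedon corner strings are pairwise distinct, and hence there is a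
unique lexicographically largest one. -/
theorem asymmetric_unique_largest_string (S : Finset (ℤ × ℤ)) (hcard : 2 ≤ S.card)
    (hn : 2 ≤ nDim S) (hmn : nDim S < mDim S)
    (h1 : ¬ reflH S) (h2 : ¬ reflV S) (h3 : ¬ reflDiag S) (h4 : ¬ reflAnti S)
    (h5 : ¬ rot90 S) (h6 : ¬ rot180 S) :
    ([lamAB S, lamBA S, lamCD S, lamDC S]).Nodup ∧
    ∃! w : List Bool, w ∈ [lamAB S, lamBA S, lamCD S, lamDC S] ∧
      ∀ u ∈ [lamAB S, lamBA S, lamCD S, lamDC S], u ≠ w → List.Lex (· < ·) u w := by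
  have hS : S.Nonempty := Finset.card_pos.mp (by omega)
  have n1 : lamAB S ≠ lamBA S := fun e => h2 (pair_AB_BA hS e)
  have n2 : lamCD S ≠ lamDC S := fun e => h2 (pair_CD_DC hS e)
  have n3 : lamAB S ≠ lamDC S := fun e => h1 (pair_AB_DC hS e)
  have n4 : lamBA S ≠ lamCD S := fun e => h1 (pair_BA_CD hS e)
  have n5 : lamAB S ≠ lamCD S := fun e => h6 (pair_AB_CD hS e)
  have n6 : lamBA S ≠ lamDC S := fun e => h6 (pair_BA_DC hS e)
  refine ⟨by simp [n1, n2, n3, n4, n5, n6], ?_⟩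
  exact exists_unique_max [lamAB S, lamBA S, lamCD S, lamDC S] (by simp)
end

section
/- Suppose inner robots r_1, …, r_k are at distinct positions p_1 < p_2 < … < p_k on ℤ and have distinct targets t_1 < t_2 < … < t_k, where robot r_i is assigned target t_i (order-preserving assignment). If robot r_i moves one step toward t_i only when the adjacent node in that direction is unoccupied, then no two robots ever move to the same node in the same step: if r_i and r_{i+1} both move to a common node v in one synchronous step, a contradiction arises with t_i < t_{i+1}. -/
/-- No collision in the order-preserving line rearrangement: two adjacent robots
`r_i` (at `p i`) and `r_{i+1}` (at `p j`, with one empty node `v` between them)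
cannot both move to `v`, `r_i` rightward toward its target and `r_{i+1}` leftward
toward its target. -/
theorem no_collision (k : ℕ) (p t : Fin k → ℤ)
    (hp : StrictMono p) (ht : StrictMono t)
    (i j : Fin k) (hij : (j : ℕ) = (i : ℕ) + 1)
    (hadj : p j = p i + 2)
    (hrempty : ∀ l : Fin k, p l ≠ p i + 1)
    (hmoveR : p i < t i)
    (hmoveL : t j < p j) :
    False := by
  have hlt : i < j := by
    rw [Fin.lt_def]; omega
  have := ht hlt
  omega
end

section
/- Let S ⊆ ℤ², finite, with smallest enclosing rectangle ABCD of dimensions m × n (m ≥ n ≥ 1, corners A bottom-left, B bottom-right, D top-left, C top-right), such that the corner A of the SER is occupied, the top side DC contains exactly one robot r_t (the tail), and r_t is not at D or C unless forced. If r_t moves one step up (S' = (S \ {r_t}) ∪ {r_t + (0,1)}), then in S' the top side of the new SER contains only r_t, and the corners of the new top side are unoccupied except possibly the tail's node; consequently the boustrophedon strings of S' read starting from the new top corners each begin with strictly more leading zeros than the string read from A, so neither new top corner can be the leading corner of S'. -/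
lemma snake_cons (S : Finset (ℤ × ℤ)) (c dL dS : ℤ × ℤ) (m n : ℕ) :
    ∃ t, snake S c dL dS (m+1) (n+1) = decide (c ∈ S) :: t := by
  simp only [snake, List.range_succ_eq_map, List.map_cons, List.flatten_cons, List.cons_append]
  norm_num

lemma mem_le_yhi (S : Finset (ℤ × ℤ)) {p : ℤ × ℤ} (hp : p ∈ S) : p.2 ≤ yhi S := by
  have h : (p.2 : WithBot ℤ) ≤ (S.image Prod.snd).max :=
    Finset.le_max (Finset.mem_image_of_mem _ hp)
  unfold yhi
  cases hmax : (S.image Prod.snd).max with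
  | bot => rw [hmax] at h; simp at h
  | coe v => rw [hmax] at h; simpa using h

/-- Phase I correctness (key step): with the corner `A = (xlo, ylo)` occupied, the
top row of the SER containing only the tail `rt` (strictly inside the top side, and
above the bottom row), after the tail moves one step up the new top row contains only
the tail, the strings from the two new top corners begin with strictly more leading
zeros than the string from `A`, and are lexicographically smaller than it; so neither
new top corner can be the leading corner. -/
theorem phaseI_tail_up (S : Finset (ℤ × ℤ)) (hS : S.Nonempty)
    (hA : (xlo S, ylo S) ∈ S)
    (rt : ℤ × ℤ) (hrt : rt ∈ S) (htop : rt.2 = yhi S)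
    (huniq : ∀ p ∈ S, p.2 = yhi S → p = rt)
    (hx1 : xlo S < rt.1) (hx2 : rt.1 < xhi S)
    (hy : ylo S < yhi S)
    (hmn : xhi S - xlo S ≤ yhi S - ylo S) :
    let S' : Finset (ℤ × ℤ) := insert (rt.1, yhi S + 1) (S.erase rt)
    let m' : ℕ := (yhi S + 1 - ylo S).toNat + 1
    let n : ℕ := (xhi S - xlo S).toNat + 1
    let lamA : List Bool := snake S' (xlo S, ylo S) (0, 1) (1, 0) m' n
    let lamD : List Bool := snake S' (xlo S, yhi S + 1) (0, -1) (1, 0) m' n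
    let lamC : List Bool := snake S' (xhi S, yhi S + 1) (0, -1) (-1, 0) m' n
    (∀ p ∈ S', p.2 = yhi S + 1 → p = (rt.1, yhi S + 1)) ∧
    (lamA.takeWhile (fun b => b = false)).length < (lamD.takeWhile (fun b => b = false)).length ∧
    (lamA.takeWhile (fun b => b = false)).length < (lamC.takeWhile (fun b => b = false)).length ∧
    List.Lex (· < ·) lamD lamA ∧ List.Lex (· < ·) lamC lamA := by
  intro S' m' n lamA lamD lamC
  -- membership facts
  have hAne : (xlo S, ylo S) ≠ rt := by
    intro h
    have : ylo S = yhi S := by rw [← htop, ← h]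
    omega
  have hAmem : (xlo S, ylo S) ∈ S' := by
    exact Finset.mem_insert_of_mem (Finset.mem_erase.mpr ⟨hAne, hA⟩)
  have hDmem : (xlo S, yhi S + 1) ∉ S' := by
    intro h
    rcases Finset.mem_insert.mp h with h | h
    · have := congrArg Prod.fst h; simp at this; omega
    · have := mem_le_yhi S (Finset.mem_of_mem_erase h); simp at this
  have hCmem : (xhi S, yhi S + 1) ∉ S' := by
    intro h
    rcases Finset.mem_insert.mp h with h | h
    · have := congrArg Prod.fst h; simp at this; omega
    · have := mem_le_yhi S (Finset.mem_of_mem_erase h); simp at this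
  -- heads of the three strings
  obtain ⟨tA, hlamA⟩ := snake_cons S' (xlo S, ylo S) (0, 1) (1, 0)
      (yhi S + 1 - ylo S).toNat (xhi S - xlo S).toNat
  obtain ⟨tD, hlamD⟩ := snake_cons S' (xlo S, yhi S + 1) (0, -1) (1, 0)
      (yhi S + 1 - ylo S).toNat (xhi S - xlo S).toNat
  obtain ⟨tC, hlamC⟩ := snake_cons S' (xhi S, yhi S + 1) (0, -1) (-1, 0)
      (yhi S + 1 - ylo S).toNat (xhi S - xlo S).toNat
  rw [decide_eq_true hAmem] at hlamA
  rw [decide_eq_false hDmem] at hlamD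
  rw [decide_eq_false hCmem] at hlamC
  have hA' : lamA = true :: tA := hlamA
  have hD' : lamD = false :: tD := hlamD
  have hC' : lamC = false :: tC := hlamC
  refine ⟨?_, ?_, ?_, ?_, ?_⟩
  · intro p hp hp2
    rcases Finset.mem_insert.mp hp with h | h
    · exact h
    · have := mem_le_yhi S (Finset.mem_of_mem_erase h); omega
  · rw [hA', hD']; simp [List.takeWhile_cons]
  · rw [hA', hC']; simp [List.takeWhile_cons]
  · rw [hA', hD']; exact List.Lex.rel (by decide)
  · rw [hA', hC']; exact List.Lex.rel (by decide)
end
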